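/- Let T > 0 and let (a_j)_{j≥0} be a sequence of nonnegative measurable functions on [0,T] such that a₀(t) ≤ 1 for all t ∈ [0,T], and for every integer j ≥ 1 and every t ∈ [0,T], a_j(t) ≤ ∫₀ᵗ Σ a_{j₁}(t′) a_{j₂}(t′) a_{j₃}(t′) dt′, where the sum runs over all triples (j₁, j₂, j₃) of nonnegative integers with j₁ + j₂ + j₃ = j − 1. Then for every j ≥ 0 and every t ∈ [0,T], a_j(t) ≤ ((2j−1)!!/j!) · t^j. -/

import Mathlib

open MeasureTheory Finset Finset.Nat

noncomputable def cc (n : ℕ) : ℝ :=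
  (∏ i ∈ Finset.range n, (2 * (i : ℝ) + 1)) / (Nat.factorial n : ℝ)

lemma cc_nonneg (n : ℕ) : 0 ≤ cc n := by
  apply div_nonneg
  · exact Finset.prod_nonneg fun i _ => by positivity
  · positivity

lemma cc_zero : cc 0 = 1 := by simp [cc]

lemma cc_succ (n : ℕ) : ((n : ℝ) + 1) * cc (n + 1) = (2 * (n : ℝ) + 1) * cc n := by
  have h1 : (Nat.factorial n : ℝ) ≠ 0 := by positivity
  unfold cc
  rw [Finset.prod_range_succ, Nat.factorial_succ]
  push_cast
  field_simp

lemma sumA (n : ℕ) : ∑ p ∈ antidiagonal n, cc p.1 * cc p.2 = 2 ^ n := by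
  induction n with
  | zero => simp [cc_zero]
  | succ n ih =>
    have twoI : ∀ m : ℕ, 2 * (∑ p ∈ antidiagonal m, (p.1 : ℝ) * (cc p.1 * cc p.2))
        = (m : ℝ) * ∑ p ∈ antidiagonal m, cc p.1 * cc p.2 := by
      intro m
      have hswap : ∑ p ∈ antidiagonal m, (p.1 : ℝ) * (cc p.1 * cc p.2)
          = ∑ p ∈ antidiagonal m, (p.2 : ℝ) * (cc p.1 * cc p.2) := by
        rw [← Finset.Nat.sum_antidiagonal_swap
          (f := fun p : ℕ × ℕ => (p.1 : ℝ) * (cc p.1 * cc p.2))]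
        exact Finset.sum_congr rfl fun p _ => by simp only [Prod.fst_swap, Prod.snd_swap]; ring
      calc 2 * (∑ p ∈ antidiagonal m, (p.1 : ℝ) * (cc p.1 * cc p.2))
          = (∑ p ∈ antidiagonal m, (p.1 : ℝ) * (cc p.1 * cc p.2))
            + ∑ p ∈ antidiagonal m, (p.2 : ℝ) * (cc p.1 * cc p.2) := by rw [← hswap]; ring
        _ = ∑ p ∈ antidiagonal m, ((p.1 : ℝ) + (p.2 : ℝ)) * (cc p.1 * cc p.2) := by
            rw [← Finset.sum_add_distrib]; exact Finset.sum_congr rfl fun p _ => by ring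
        _ = (m : ℝ) * ∑ p ∈ antidiagonal m, cc p.1 * cc p.2 := by
            rw [Finset.mul_sum]
            refine Finset.sum_congr rfl fun p hp => ?_
            have : p.1 + p.2 = m := Finset.HasAntidiagonal.mem_antidiagonal.mp hp
            have : ((p.1 : ℝ) + p.2) = (m : ℝ) := by exact_mod_cast congrArg Nat.cast this
            rw [this]
    have shift : ∑ p ∈ antidiagonal (n + 1), (p.1 : ℝ) * (cc p.1 * cc p.2)
        = 2 * (∑ p ∈ antidiagonal n, (p.1 : ℝ) * (cc p.1 * cc p.2))
          + ∑ p ∈ antidiagonal n, cc p.1 * cc p.2 := by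
      rw [Finset.Nat.sum_antidiagonal_succ
        (f := fun p : ℕ × ℕ => (p.1 : ℝ) * (cc p.1 * cc p.2))]
      simp only [Nat.cast_zero, zero_mul, zero_add]
      rw [Finset.mul_sum, ← Finset.sum_add_distrib]
      refine Finset.sum_congr rfl fun p _ => ?_
      have h := cc_succ p.1
      push_cast
      calc ((p.1 : ℝ) + 1) * (cc (p.1 + 1) * cc p.2)
          = (((p.1 : ℝ) + 1) * cc (p.1 + 1)) * cc p.2 := by ring
        _ = ((2 * (p.1 : ℝ) + 1) * cc p.1) * cc p.2 := by rw [h]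
        _ = 2 * ((p.1 : ℝ) * (cc p.1 * cc p.2)) + cc p.1 * cc p.2 := by ring
    have key : ((n : ℝ) + 1) * ∑ p ∈ antidiagonal (n + 1), cc p.1 * cc p.2
        = ((n : ℝ) + 1) * (2 * ∑ p ∈ antidiagonal n, cc p.1 * cc p.2) := by
      have t1 := twoI (n + 1)
      have t2 := twoI n
      push_cast at t1
      rw [← t1, shift]
      nlinarith [t2]
    have hne : ((n : ℝ) + 1) ≠ 0 := by positivity
    have := mul_left_cancel₀ hne key
    rw [this, ih]; ring

lemma sumB (n : ℕ) : ∑ p ∈ antidiagonal n, cc p.1 * 2 ^ p.2 = ((n : ℝ) + 1) * cc (n + 1) := by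
  induction n with
  | zero =>
    have : cc 1 = 1 := by simp [cc, Nat.factorial]
    simp [cc_zero, this]
  | succ n ih =>
    rw [Finset.Nat.sum_antidiagonal_succ' (f := fun p : ℕ × ℕ => cc p.1 * 2 ^ p.2)]
    simp only [pow_zero, mul_one]
    have h2 : ∑ p ∈ antidiagonal n, cc p.1 * 2 ^ (p.2 + 1)
        = 2 * ∑ p ∈ antidiagonal n, cc p.1 * 2 ^ p.2 := by
      rw [Finset.mul_sum]; exact Finset.sum_congr rfl fun p _ => by ring
    rw [h2, ih]
    have h3 := cc_succ (n + 1)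
    push_cast at h3 ⊢
    nlinarith [h3]

lemma cube_sum (n : ℕ) (F : ℕ → ℕ → ℕ → ℝ) :
    ∑ p ∈ (Finset.range (n + 1) ×ˢ Finset.range (n + 1) ×ˢ Finset.range (n + 1)).filter
        (fun p => p.1 + p.2.1 + p.2.2 = n), F p.1 p.2.1 p.2.2
    = ∑ q ∈ antidiagonal n, ∑ r ∈ antidiagonal q.2, F q.1 r.1 r.2 := by
  rw [Finset.sum_sigma']
  refine Finset.sum_nbij' (i := fun p => ⟨(p.1, p.2.1 + p.2.2), (p.2.1, p.2.2)⟩)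
    (j := fun x => (x.1.1, x.2.1, x.2.2)) ?_ ?_ ?_ ?_ ?_
  · intro p hp
    simp only [Finset.mem_filter, Finset.mem_product, Finset.mem_range] at hp
    simp only [Finset.mem_sigma, Finset.HasAntidiagonal.mem_antidiagonal]
    exact ⟨by omega, trivial⟩
  · intro x hx
    simp only [Finset.mem_sigma, Finset.HasAntidiagonal.mem_antidiagonal] at hx
    simp only [Finset.mem_filter, Finset.mem_product, Finset.mem_range]
    omega
  · intro p _; rfl
  · intro x hx
    rcases x with ⟨⟨q1, q2⟩, r⟩
    simp only [Finset.mem_sigma, Finset.HasAntidiagonal.mem_antidiagonal] at hx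
    obtain ⟨-, h2⟩ := hx
    subst h2
    rfl
  · intro p _; rfl

lemma triple (n : ℕ) :
    ∑ p ∈ (Finset.range (n + 1) ×ˢ Finset.range (n + 1) ×ˢ Finset.range (n + 1)).filter
        (fun p => p.1 + p.2.1 + p.2.2 = n), cc p.1 * cc p.2.1 * cc p.2.2
    = ((n : ℝ) + 1) * cc (n + 1) := by
  rw [cube_sum n (fun i k l => cc i * cc k * cc l)]
  have h : ∀ q ∈ antidiagonal n, (∑ r ∈ antidiagonal q.2, cc q.1 * cc r.1 * cc r.2)
      = cc q.1 * 2 ^ q.2 := by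
    intro q _
    rw [← sumA q.2, Finset.mul_sum]
    exact Finset.sum_congr rfl fun r _ => by ring
  rw [Finset.sum_congr rfl h, sumB]

theorem stmt12 (T : ℝ) (hT : 0 < T) (a : ℕ → ℝ → ℝ)
    (hmeas : ∀ j, Measurable (a j))
    (hpos : ∀ j, ∀ t ∈ Set.Icc (0 : ℝ) T, 0 ≤ a j t)
    (h0 : ∀ t ∈ Set.Icc (0 : ℝ) T, a 0 t ≤ 1)
    (hrec : ∀ j : ℕ, 1 ≤ j → ∀ t ∈ Set.Icc (0 : ℝ) T,
      a j t ≤ ∫ s in (0 : ℝ)..t,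
        ∑ p ∈ (Finset.range j ×ˢ Finset.range j ×ˢ Finset.range j).filter
            (fun p => p.1 + p.2.1 + p.2.2 + 1 = j),
          a p.1 s * a p.2.1 s * a p.2.2 s) :
    ∀ j : ℕ, ∀ t ∈ Set.Icc (0 : ℝ) T,
      a j t ≤ ((∏ i ∈ Finset.range j, (2 * (i : ℝ) + 1)) / (Nat.factorial j : ℝ)) *
        t ^ j := by
  intro j
  induction j using Nat.strong_induction_on with
  | _ j IH =>
    intro t ht
    obtain ⟨ht0, htT⟩ := ht
    match j, IH with
    | 0, _ => simpa using h0 t ⟨ht0, htT⟩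
    | n + 1, IH =>
      show a (n + 1) t ≤ cc (n + 1) * t ^ (n + 1)
      have hkey := hrec (n + 1) (by omega) t ⟨ht0, htT⟩
      set SS := (Finset.range (n + 1) ×ˢ Finset.range (n + 1) ×ˢ Finset.range (n + 1)).filter
        (fun p : ℕ × ℕ × ℕ => p.1 + p.2.1 + p.2.2 + 1 = n + 1) with hSS
      set G : ℝ → ℝ := fun s => ∑ p ∈ SS, a p.1 s * a p.2.1 s * a p.2.2 s with hG
      set K : ℝ := ((n : ℝ) + 1) * cc (n + 1) with hK
      have hsum : ∑ p ∈ SS, cc p.1 * cc p.2.1 * cc p.2.2 = K := by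
        rw [hSS, hK, ← triple n]
        congr 1
        apply Finset.filter_congr
        intro p _
        constructor <;> intro h <;> omega
      have hbound : ∀ s ∈ Set.Icc (0 : ℝ) t, G s ≤ K * s ^ n := by
        intro s hs
        have hsT : s ∈ Set.Icc (0 : ℝ) T := ⟨hs.1, hs.2.trans htT⟩
        have hterm : ∀ p ∈ SS, a p.1 s * a p.2.1 s * a p.2.2 s
            ≤ (cc p.1 * cc p.2.1 * cc p.2.2) * s ^ n := by
          intro p hp
          simp only [hSS, Finset.mem_filter, Finset.mem_product, Finset.mem_range] at hp
          obtain ⟨⟨h1, h2, h3⟩, hsum'⟩ := hp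
          have e1 : a p.1 s ≤ cc p.1 * s ^ p.1 := IH p.1 h1 s hsT
          have e2 : a p.2.1 s ≤ cc p.2.1 * s ^ p.2.1 := IH p.2.1 h2 s hsT
          have e3 : a p.2.2 s ≤ cc p.2.2 * s ^ p.2.2 := IH p.2.2 h3 s hsT
          have n1 := hpos p.1 s hsT
          have n2 := hpos p.2.1 s hsT
          have n3 := hpos p.2.2 s hsT
          have hc1 : (0 : ℝ) ≤ cc p.1 * s ^ p.1 :=
            mul_nonneg (cc_nonneg _) (pow_nonneg hs.1 _)
          have hc2 : (0 : ℝ) ≤ cc p.2.1 * s ^ p.2.1 :=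
            mul_nonneg (cc_nonneg _) (pow_nonneg hs.1 _)
          have step : a p.1 s * a p.2.1 s * a p.2.2 s
              ≤ (cc p.1 * s ^ p.1) * (cc p.2.1 * s ^ p.2.1) * (cc p.2.2 * s ^ p.2.2) := by
            apply mul_le_mul (mul_le_mul e1 e2 n2 hc1) e3 n3 (mul_nonneg hc1 hc2)
          refine step.trans (le_of_eq ?_)
          have hexp : p.1 + p.2.1 + p.2.2 = n := by omega
          rw [← hexp, pow_add, pow_add]; ring
        calc G s ≤ ∑ p ∈ SS, (cc p.1 * cc p.2.1 * cc p.2.2) * s ^ n :=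
              Finset.sum_le_sum hterm
          _ = K * s ^ n := by rw [← Finset.sum_mul, hsum]
      have hGmeas : Measurable G := by
        apply Finset.measurable_sum
        intro p _
        exact ((hmeas p.1).mul (hmeas p.2.1)).mul (hmeas p.2.2)
      have hgint : IntervalIntegrable (fun s => K * s ^ n) volume 0 t :=
        (continuous_const.mul (continuous_pow n)).intervalIntegrable 0 t
      have hGnn : ∀ s ∈ Set.Icc (0 : ℝ) t, 0 ≤ G s := by
        intro s hs
        have hsT : s ∈ Set.Icc (0 : ℝ) T := ⟨hs.1, hs.2.trans htT⟩
        exact Finset.sum_nonneg fun p _ =>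
          mul_nonneg (mul_nonneg (hpos _ s hsT) (hpos _ s hsT)) (hpos _ s hsT)
      have hGint : IntervalIntegrable G volume 0 t := by
        apply hgint.mono_fun' (hGmeas.aestronglyMeasurable)
        rw [Set.uIoc_of_le ht0]
        refine MeasureTheory.ae_restrict_of_forall_mem measurableSet_Ioc ?_
        intro s hs
        have hs' : s ∈ Set.Icc (0 : ℝ) t := ⟨le_of_lt hs.1, hs.2⟩
        simp only [Real.norm_eq_abs]
        rw [abs_of_nonneg (hGnn s hs')]
        exact hbound s hs'
      calc a (n + 1) t ≤ ∫ s in (0 : ℝ)..t, G s := hkey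
        _ ≤ ∫ s in (0 : ℝ)..t, K * s ^ n := by
            exact intervalIntegral.integral_mono_on ht0 hGint hgint hbound
        _ = cc (n + 1) * t ^ (n + 1) := by
            rw [intervalIntegral.integral_const_mul, integral_pow, hK]
            have hne : ((n : ℝ) + 1) ≠ 0 := by positivity
            field_simp
            ring
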